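/- For fixed s ≥ 2, if the abc conjecture with ε = 1/6 holds (only finitely many coprime triples a + b = c with c ≥ rad(abc)^{7/6}), then there are only finitely many triples (n, b, q) with n ≥ 3, b ≥ 2, q ≥ 3 and n·s^n + 1 = (b^q - 1)/(b - 1). -/

import Mathlib

def rad (m : ℕ) : ℕ := ∏ p ∈ m.primeFactors, p

lemma rad_pos (m : ℕ) : 0 < rad m :=
  Finset.prod_pos (fun _ hp => (Nat.prime_of_mem_primeFactors hp).pos)

lemma rad_le_rad_of_dvd {a b : ℕ} (h : a ∣ b) (hb : b ≠ 0) : rad a ≤ rad b :=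
  Nat.le_of_dvd (rad_pos b)
    (Finset.prod_dvd_prod_of_subset _ _ _ (Nat.primeFactors_mono h hb))

lemma rad_le_self {m : ℕ} (hm : m ≠ 0) : rad m ≤ m :=
  Nat.le_of_dvd (Nat.pos_of_ne_zero hm) (Nat.prod_primeFactors_dvd m)

lemma rad_mul_le (a b : ℕ) (ha : a ≠ 0) (hb : b ≠ 0) : rad (a * b) ≤ rad a * rad b := by
  unfold rad
  rw [Nat.primeFactors_mul ha hb]
  calc ∏ p ∈ a.primeFactors ∪ b.primeFactors, p
      ≤ (∏ p ∈ a.primeFactors ∪ b.primeFactors, p) * ∏ p ∈ a.primeFactors ∩ b.primeFactors, p :=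
        Nat.le_mul_of_pos_right _ (Finset.prod_pos (fun p hp => (Nat.prime_of_mem_primeFactors (Finset.mem_of_mem_inter_left hp)).pos))
    _ = (∏ p ∈ a.primeFactors, p) * ∏ p ∈ b.primeFactors, p := Finset.prod_union_inter

lemma rad_pow (a k : ℕ) (hk : k ≠ 0) : rad (a ^ k) = rad a := by
  unfold rad
  rw [Nat.primeFactors_pow a hk]

lemma pow8_le (n : ℕ) (hn : 256 ≤ n) : n ^ 8 ≤ 2 ^ n := by
  induction n, hn using Nat.le_induction with
  | base => norm_num
  | succ n hn ih =>
    have h1 : 256 ^ 8 * (n + 1) ^ 8 ≤ 257 ^ 8 * n ^ 8 := by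
      calc 256 ^ 8 * (n + 1) ^ 8 = (256 * (n + 1)) ^ 8 := by ring
        _ ≤ (257 * n) ^ 8 := Nat.pow_le_pow_left (by omega) 8
        _ = 257 ^ 8 * n ^ 8 := by ring
    have h2 : 257 ^ 8 * n ^ 8 ≤ 256 ^ 8 * (2 * n ^ 8) := by
      have h : (257:ℕ) ^ 8 ≤ 256 ^ 8 * 2 := by norm_num
      calc 257 ^ 8 * n ^ 8 ≤ 256 ^ 8 * 2 * n ^ 8 := Nat.mul_le_mul_right _ h
        _ = 256 ^ 8 * (2 * n ^ 8) := by ring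
    have h3 : (n + 1) ^ 8 ≤ 2 * n ^ 8 :=
      Nat.le_of_mul_le_mul_left (le_trans h1 h2) (by norm_num)
    calc (n + 1) ^ 8 ≤ 2 * n ^ 8 := h3
      _ ≤ 2 * 2 ^ n := by omega
      _ = 2 ^ (n + 1) := by ring

lemma main_ineq (s n b c : ℕ) (hs : 2 ≤ s) (hn : 256 ≤ n) (hb : 2 ≤ b)
    (hbc : b ^ 14 ≤ c ^ 7) (hnc : n * s ^ n ≤ 2 * c) :
    (n * s * b * (n * s)) ^ 7 ≤ c ^ 6 := by
  have hc1 : 1 ≤ c := by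
    rcases Nat.eq_zero_or_pos c with h | h
    · subst h; simp at hbc; omega
    · exact h
  set e := 5 * n - 33 with he
  have h5n : 5 * n = e + 33 := by omega
  have hn23 : n ^ 23 ≤ 2 ^ (3 * n) := by
    calc n ^ 23 ≤ n ^ 24 := Nat.pow_le_pow_right (by omega) (by omega)
      _ = (n ^ 8) ^ 3 := by ring
      _ ≤ (2 ^ n) ^ 3 := Nat.pow_le_pow_left (pow8_le n hn) 3
      _ = 2 ^ (3 * n) := by rw [← pow_mul]; ring_nf
  have h2e : 2 ^ (3 * n) ≤ 2 ^ e := Nat.pow_le_pow_right (by omega) (by omega)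
  have hse : 2 ^ e ≤ s ^ e := Nat.pow_le_pow_left hs e
  have key : 32 * (n ^ 28 * s ^ 28) ≤ n ^ 5 * s ^ (5 * n) := by
    calc 32 * (n ^ 28 * s ^ 28) = n ^ 5 * (2 ^ 5 * n ^ 23) * s ^ 28 := by ring
      _ ≤ n ^ 5 * (s ^ 5 * s ^ e) * s ^ 28 := by
          have h32 : (2:ℕ) ^ 5 ≤ s ^ 5 := Nat.pow_le_pow_left hs 5
          have h := Nat.mul_le_mul h32 (le_trans (le_trans hn23 h2e) hse)
          exact Nat.mul_le_mul (Nat.mul_le_mul_left _ h) (le_refl _)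
      _ = n ^ 5 * s ^ (5 + e + 28) := by rw [pow_add, pow_add]; ring
      _ = n ^ 5 * s ^ (5 * n) := by rw [show 5 + e + 28 = 5 * n by omega]
  have hc5 : n ^ 5 * s ^ (5 * n) ≤ 32 * c ^ 5 := by
    calc n ^ 5 * s ^ (5 * n) = (n * s ^ n) ^ 5 := by rw [mul_pow, ← pow_mul]; ring_nf
      _ ≤ (2 * c) ^ 5 := Nat.pow_le_pow_left hnc 5
      _ = 32 * c ^ 5 := by ring
  have hns28 : n ^ 28 * s ^ 28 ≤ c ^ 5 :=
    Nat.le_of_mul_le_mul_left (le_trans key hc5) (by norm_num)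
  have hsq : ((n * s * b * (n * s)) ^ 7) ^ 2 ≤ (c ^ 6) ^ 2 := by
    calc ((n * s * b * (n * s)) ^ 7) ^ 2 = n ^ 28 * s ^ 28 * b ^ 14 := by ring
      _ ≤ c ^ 5 * c ^ 7 := Nat.mul_le_mul hns28 hbc
      _ = (c ^ 6) ^ 2 := by ring
  exact (Nat.pow_le_pow_iff_left (by norm_num : (2:ℕ) ≠ 0)).mp hsq

lemma rpow76_le {r c : ℕ} (h : r ^ 7 ≤ c ^ 6) : (r : ℝ) ^ ((7 : ℝ) / 6) ≤ (c : ℝ) := by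
  have h0 : (0 : ℝ) ≤ (r : ℝ) := by positivity
  have hc0 : (0 : ℝ) ≤ (c : ℝ) := by positivity
  have h7 : ((r : ℝ)) ^ ((7 : ℕ) : ℝ) ≤ ((c : ℝ)) ^ ((6 : ℕ) : ℝ) := by
    rw [Real.rpow_natCast, Real.rpow_natCast]
    exact_mod_cast h
  calc (r : ℝ) ^ ((7 : ℝ) / 6) = ((r : ℝ) ^ ((7 : ℕ) : ℝ)) ^ ((1 : ℝ) / 6) := by
        rw [← Real.rpow_mul h0]; norm_num
    _ ≤ ((c : ℝ) ^ ((6 : ℕ) : ℝ)) ^ ((1 : ℝ) / 6) :=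
        Real.rpow_le_rpow (Real.rpow_nonneg h0 _) h7 (by norm_num)
    _ = (c : ℝ) := by rw [← Real.rpow_mul hc0]; norm_num

theorem stmt_16 (s : ℕ) (hs : 2 ≤ s)
    (habc : {t : ℕ × ℕ × ℕ | 0 < t.1 ∧ 0 < t.2.1 ∧ Nat.Coprime t.1 t.2.1 ∧
        t.1 + t.2.1 = t.2.2 ∧
        ((t.2.2 : ℝ) ≥ (rad (t.1 * t.2.1 * t.2.2) : ℝ) ^ ((7 : ℝ) / 6))}.Finite) :
    {t : ℕ × ℕ × ℕ | 3 ≤ t.1 ∧ 2 ≤ t.2.1 ∧ 3 ≤ t.2.2 ∧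
      (t.1 * s ^ t.1 + 1) * (t.2.1 - 1) = t.2.1 ^ t.2.2 - 1}.Finite := by
  obtain ⟨C, hC⟩ := (habc.image (fun t => t.2.2)).bddAbove
  set K := 2 * (256 * s ^ 256 + C) + 2 with hK
  apply Set.Finite.subset
    (((Set.finite_Iic K).prod ((Set.finite_Iic K).prod (Set.finite_Iic K))))
  rintro ⟨n, b, q⟩ ⟨hn3, hb2, hq3, heq⟩
  simp only [Set.mem_setOf_eq] at heq hn3 hb2 hq3
  -- basic facts
  have hb1 : 1 ≤ b := by omega
  have hs0 : 0 < s := by omega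
  have hn0 : 0 < n := by omega
  have hq1 : q - 1 ≠ 0 := by omega
  have hc4 : 4 ≤ b ^ (q - 1) := by
    calc (4:ℕ) = 2 ^ 2 := by norm_num
      _ ≤ b ^ 2 := Nat.pow_le_pow_left hb2 2
      _ ≤ b ^ (q - 1) := Nat.pow_le_pow_right hb1 (by omega)
  have hbq : b ^ q = b ^ (q - 1) * b := by
    rw [← pow_succ]; congr 1; omega
  have hns0 : n * s ^ n ≠ 0 := by positivity
  -- key identity
  have hid : b * (b ^ (q - 1) - 1) = n * s ^ n * (b - 1) := by
    have h1 : 1 ≤ b ^ q := Nat.one_le_pow _ _ (by omega)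
    have h2 : 1 ≤ b ^ (q - 1) := by omega
    zify [hb1, h1, h2] at heq ⊢
    have hbqz : (b:ℤ) ^ q = (b:ℤ) ^ (q - 1) * b := by exact_mod_cast hbq
    linear_combination -heq - hbqz
  -- consequences
  have hco : Nat.Coprime b (b - 1) := by
    have h := Nat.coprime_add_self_left.mpr (Nat.coprime_one_left (b - 1))
    have e : 1 + (b - 1) = b := by omega
    rwa [e] at h
  have hb_dvd : b ∣ n * s ^ n :=
    Nat.Coprime.dvd_of_dvd_mul_right hco ⟨b ^ (q - 1) - 1, hid.symm⟩
  have hm_dvd : b ^ (q - 1) - 1 ∣ n * s ^ n * (b - 1) :=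
    ⟨b, by rw [← hid, mul_comm]⟩
  have hle_ns : b ^ (q - 1) - 1 ≤ n * s ^ n := by
    have h : b * (b ^ (q - 1) - 1) ≤ (n * s ^ n) * b := by
      rw [hid]; exact Nat.mul_le_mul_left _ (by omega)
    have h2 : b * (b ^ (q - 1) - 1) = b * (n * s ^ n) → True := fun _ => trivial
    calc b ^ (q - 1) - 1 = (b * (b ^ (q - 1) - 1)) / b := by
          rw [Nat.mul_div_cancel_left _ (by omega : 0 < b)]
      _ ≤ ((n * s ^ n) * b) / b := Nat.div_le_div_right h
      _ = n * s ^ n := Nat.mul_div_cancel _ (by omega)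
  have hns2c : n * s ^ n ≤ 2 * b ^ (q - 1) := by
    have h : n * s ^ n * (b - 1) ≤ 2 * (b - 1) * (b ^ (q - 1)) := by
      rw [← hid]
      calc b * (b ^ (q - 1) - 1) ≤ (2 * (b - 1)) * (b ^ (q - 1) - 1) :=
            Nat.mul_le_mul_right _ (by omega)
        _ ≤ 2 * (b - 1) * b ^ (q - 1) := Nat.mul_le_mul_left _ (by omega)
    have hb10 : 0 < b - 1 := by omega
    have h2 : n * s ^ n * (b - 1) = (b - 1) * (n * s ^ n) := by ring
    have h3 : 2 * (b - 1) * b ^ (q - 1) = (b - 1) * (2 * b ^ (q - 1)) := by ring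
    rw [h2, h3] at h
    exact Nat.le_of_mul_le_mul_left h hb10
  -- bound b^(q-1) ≤ 256 * s^256 + C  (case split on n)
  have hcb : b ^ (q - 1) ≤ 256 * s ^ 256 + C := by
    rcases le_or_gt n 255 with hsmall | hbig
    · have h1 : n * s ^ n ≤ 255 * s ^ 255 :=
        Nat.mul_le_mul hsmall (Nat.pow_le_pow_right hs0 hsmall)
      have h2 : 255 * s ^ 255 + 1 ≤ 256 * s ^ 256 := by
        have : s ^ 255 ≤ s ^ 256 := Nat.pow_le_pow_right hs0 (by omega)
        nlinarith [Nat.one_le_pow 255 s hs0]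
      omega
    · -- big n: use abc
      have hn256 : 256 ≤ n := hbig
      -- radical bounds
      have hrad_ns : rad (n * s ^ n) ≤ n * s := by
        calc rad (n * s ^ n) ≤ rad n * rad (s ^ n) := rad_mul_le _ _ (by omega) (by positivity)
          _ = rad n * rad s := by rw [rad_pow _ _ (by omega)]
          _ ≤ n * s := Nat.mul_le_mul (rad_le_self (by omega)) (rad_le_self (by omega))
      have hradb : rad b ≤ n * s :=
        le_trans (rad_le_rad_of_dvd hb_dvd hns0) hrad_ns
      have hradm : rad (b ^ (q - 1) - 1) ≤ n * s * (b - 1) := by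
        have h0 : n * s ^ n * (b - 1) ≠ 0 := by
          have : 0 < b - 1 := by omega
          positivity
        calc rad (b ^ (q - 1) - 1) ≤ rad (n * s ^ n * (b - 1)) :=
              rad_le_rad_of_dvd hm_dvd h0
          _ ≤ rad (n * s ^ n) * rad (b - 1) := rad_mul_le _ _ hns0 (by omega)
          _ ≤ n * s * (b - 1) := Nat.mul_le_mul hrad_ns (rad_le_self (by omega))
      have hR : rad ((b ^ (q - 1) - 1) * b ^ (q - 1)) ≤ n * s * b * (n * s) := by
        calc rad ((b ^ (q - 1) - 1) * b ^ (q - 1))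
            ≤ rad (b ^ (q - 1) - 1) * rad (b ^ (q - 1)) :=
              rad_mul_le _ _ (by omega) (by positivity)
          _ = rad (b ^ (q - 1) - 1) * rad b := by rw [rad_pow _ _ hq1]
          _ ≤ (n * s * (b - 1)) * (n * s) := Nat.mul_le_mul hradm hradb
          _ ≤ n * s * b * (n * s) := by
              have : n * s * (b - 1) ≤ n * s * b := Nat.mul_le_mul_left _ (by omega)
              exact Nat.mul_le_mul_right _ this
      have hbc14 : b ^ 14 ≤ (b ^ (q - 1)) ^ 7 := by
        rw [← pow_mul]
        exact Nat.pow_le_pow_right hb1 (by omega)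
      have hU : (n * s * b * (n * s)) ^ 7 ≤ (b ^ (q - 1)) ^ 6 :=
        main_ineq s n b (b ^ (q - 1)) hs hn256 hb2 hbc14 (by omega)
      have hR7 : (rad (1 * (b ^ (q - 1) - 1) * b ^ (q - 1))) ^ 7 ≤ (b ^ (q - 1)) ^ 6 := by
        rw [one_mul]
        exact le_trans (Nat.pow_le_pow_left hR 7) hU
      have hmem : (1, b ^ (q - 1) - 1, b ^ (q - 1)) ∈
          {t : ℕ × ℕ × ℕ | 0 < t.1 ∧ 0 < t.2.1 ∧ Nat.Coprime t.1 t.2.1 ∧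
            t.1 + t.2.1 = t.2.2 ∧
            ((t.2.2 : ℝ) ≥ (rad (t.1 * t.2.1 * t.2.2) : ℝ) ^ ((7 : ℝ) / 6))} := by
        exact ⟨one_pos, show 0 < b ^ (q - 1) - 1 by omega, Nat.coprime_one_left _,
          show 1 + (b ^ (q - 1) - 1) = b ^ (q - 1) by omega, rpow76_le hR7⟩
      have h22 : b ^ (q - 1) ≤ C := hC ⟨_, hmem, rfl⟩
      omega
  -- final bounds
  have hbK : b ≤ b ^ (q - 1) := Nat.le_self_pow hq1 b
  have hqK : q ≤ b ^ (q - 1) := by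
    have h1 : q - 1 < 2 ^ (q - 1) := Nat.lt_two_pow_self (n := q - 1)
    have h2 : 2 ^ (q - 1) ≤ b ^ (q - 1) := Nat.pow_le_pow_left hb2 _
    omega
  have hnK : n ≤ 2 * b ^ (q - 1) := by
    have h1 : n ≤ n * s ^ n :=
      Nat.le_mul_of_pos_right _ (by positivity)
    omega
  have hfin1 : n ≤ K := by omega
  have hfin2 : b ≤ K := by omega
  have hfin3 : q ≤ K := by omega
  exact ⟨hfin1, hfin2, hfin3⟩
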